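/- arXiv:1907.11012 — 3 statements merged into one kernel-verified Lean document; each statement's English description precedes it below -/
import Mathlib

section
/- The quadruple of compact intervals W_A = [τ−2, τ−1], W_B = [−1, τ−2], W_C = [τ−2, 2τ−3], W_D = [2τ−3, τ−1] is the unique quadruple (W_A, W_B, W_C, W_D) of nonempty compact subsets of ℝ satisfying the system W_A = σ·W_A ∪ (σ·W_C + σ²), W_B = σ·W_A + σ, W_C = σ·W_C ∪ σ·W_D, W_D = σ·W_B. Moreover, the covering function m_c = 1_{W_A} + 1_{W_B} + 1_{W_C} + 1_{W_D} is not almost-everywhere constant on the total window [−1, τ−1]: it equals 1 Lebesgue-almost everywhere on [−1, τ−2] and equals 2 Lebesgue-almost everywhere on [τ−2, τ−1]. -/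
open Set MeasureTheory
open EMetric Metric

lemma affImage (c d a b : ℝ) (hc : c < 0) (hab : a ≤ b) :
    (fun s => c * s + d) '' Icc a b = Icc (c * b + d) (c * a + d) := by
  ext y
  constructor
  · rintro ⟨x, hx, rfl⟩
    refine ⟨?_, ?_⟩ <;> dsimp only <;> nlinarith [hx.1, hx.2]
  · rintro ⟨h1, h2⟩
    refine ⟨(y - d) / c, ⟨?_, ?_⟩, ?_⟩
    · rw [le_div_iff_of_neg hc]; linarith
    · rw [div_le_iff_of_neg hc]; linarith
    · dsimp only; rw [mul_div_cancel₀ _ hc.ne]; ring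

lemma mulImage (c a b : ℝ) (hc : c < 0) (hab : a ≤ b) :
    (fun s => c * s) '' Icc a b = Icc (c * b) (c * a) := by
  simpa using affImage c 0 a b hc hab

lemma hausUnion (s t u v : Set ℝ) :
    hausdorffEdist (s ∪ t) (u ∪ v) ≤ max (hausdorffEdist s u) (hausdorffEdist t v) := by
  apply hausdorffEdist_le_of_infEdist
  · rintro x (hx | hx)
    · exact le_trans (le_trans (infEdist_anti subset_union_left)
        (infEdist_le_hausdorffEdist_of_mem hx)) (le_max_left _ _)
    · exact le_trans (le_trans (infEdist_anti subset_union_right)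
        (infEdist_le_hausdorffEdist_of_mem hx)) (le_max_right _ _)
  · rintro x (hx | hx)
    · refine le_trans (le_trans (infEdist_anti subset_union_left)
        ((infEdist_le_hausdorffEdist_of_mem hx).trans (le_of_eq hausdorffEdist_comm)))
        (le_max_left _ _)
    · refine le_trans (le_trans (infEdist_anti subset_union_right)
        ((infEdist_le_hausdorffEdist_of_mem hx).trans (le_of_eq hausdorffEdist_comm)))
        (le_max_right _ _)

lemma lipInf {f : ℝ → ℝ} {K : NNReal} (hf : LipschitzWith K f) (hK : (K : ENNReal) ≠ 0)
    (x : ℝ) (t : Set ℝ) : infEdist (f x) (f '' t) ≤ K * infEdist x t := by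
  have : (K : ENNReal) * infEdist x t = ⨅ y ∈ t, (K : ENNReal) * edist x y := by
    rw [infEdist, infEDist, ENNReal.mul_iInf_of_ne hK ENNReal.coe_ne_top]
    refine iInf_congr fun y => ?_
    rw [ENNReal.mul_iInf_of_ne hK ENNReal.coe_ne_top]
  rw [this]
  refine le_iInf₂ fun y hy => ?_
  exact (infEdist_le_edist_of_mem (mem_image_of_mem f hy)).trans (hf.edist_le_mul x y)

lemma hausLip {f : ℝ → ℝ} {K : NNReal} (hf : LipschitzWith K f) (hK : (K : ENNReal) ≠ 0)
    (s t : Set ℝ) : hausdorffEdist (f '' s) (f '' t) ≤ K * hausdorffEdist s t := by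
  apply hausdorffEdist_le_of_infEdist
  · rintro _ ⟨x, hx, rfl⟩
    exact (lipInf hf hK x t).trans
      (mul_le_mul_right (infEdist_le_hausdorffEdist_of_mem hx) _)
  · rintro _ ⟨x, hx, rfl⟩
    refine (lipInf hf hK x s).trans (mul_le_mul_right ?_ _)
    exact (infEdist_le_hausdorffEdist_of_mem hx).trans (le_of_eq hausdorffEdist_comm)

lemma ifs_unique {σ : ℝ} (hσ0 : σ ≠ 0) (hσ1 : |σ| < 1)
    {A B C D A' B' C' D' : Set ℝ}
    (nA : A.Nonempty) (cA : IsCompact A) (nB : B.Nonempty) (cB : IsCompact B)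
    (nC : C.Nonempty) (cC : IsCompact C) (nD : D.Nonempty) (cD : IsCompact D)
    (nA' : A'.Nonempty) (cA' : IsCompact A') (nB' : B'.Nonempty) (cB' : IsCompact B')
    (nC' : C'.Nonempty) (cC' : IsCompact C') (nD' : D'.Nonempty) (cD' : IsCompact D')
    (eA : A = (fun s => σ * s) '' A ∪ (fun s => σ * s + σ ^ 2) '' C)
    (eB : B = (fun s => σ * s + σ) '' A)
    (eC : C = (fun s => σ * s) '' C ∪ (fun s => σ * s) '' D)
    (eD : D = (fun s => σ * s) '' B)
    (eA' : A' = (fun s => σ * s) '' A' ∪ (fun s => σ * s + σ ^ 2) '' C')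
    (eB' : B' = (fun s => σ * s + σ) '' A')
    (eC' : C' = (fun s => σ * s) '' C' ∪ (fun s => σ * s) '' D')
    (eD' : D' = (fun s => σ * s) '' B') :
    A = A' ∧ B = B' ∧ C = C' ∧ D = D' := by
  set K : NNReal := ⟨|σ|, abs_nonneg σ⟩ with hKdef
  have hKpos : 0 < K := by
    rw [← NNReal.coe_lt_coe]
    exact abs_pos.mpr hσ0
  have hK0 : (K : ENNReal) ≠ 0 := by exact_mod_cast hKpos.ne'
  have hK1 : (K : ENNReal) < 1 := by
    rw [← ENNReal.coe_one, ENNReal.coe_lt_coe, ← NNReal.coe_lt_coe]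
    exact hσ1
  have l1 : LipschitzWith K (fun s : ℝ => σ * s) := by
    refine LipschitzWith.of_dist_le_mul fun x y => ?_
    simp only [Real.dist_eq, ← mul_sub, abs_mul]
    exact le_of_eq rfl
  have l2 : ∀ d : ℝ, LipschitzWith K (fun s : ℝ => σ * s + d) := by
    intro d
    refine LipschitzWith.of_dist_le_mul fun x y => ?_
    have : σ * x + d - (σ * y + d) = σ * (x - y) := by ring
    simp only [Real.dist_eq, this, abs_mul]
    exact le_of_eq rfl
  set dA := hausdorffEdist A A' with hdA
  set dB := hausdorffEdist B B' with hdB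
  set dC := hausdorffEdist C C' with hdC
  set dD := hausdorffEdist D D' with hdD
  have finA : dA ≠ ⊤ := hausdorffEdist_ne_top_of_nonempty_of_bounded nA nA' cA.isBounded cA'.isBounded
  have finB : dB ≠ ⊤ := hausdorffEdist_ne_top_of_nonempty_of_bounded nB nB' cB.isBounded cB'.isBounded
  have finC : dC ≠ ⊤ := hausdorffEdist_ne_top_of_nonempty_of_bounded nC nC' cC.isBounded cC'.isBounded
  have finD : dD ≠ ⊤ := hausdorffEdist_ne_top_of_nonempty_of_bounded nD nD' cD.isBounded cD'.isBounded
  set Dm := max (max dA dB) (max dC dD) with hDm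
  have leA : dA ≤ Dm := le_trans (le_max_left _ _) (le_max_left _ _)
  have leB : dB ≤ Dm := le_trans (le_max_right _ _) (le_max_left _ _)
  have leC : dC ≤ Dm := le_trans (le_max_left _ _) (le_max_right _ _)
  have leD : dD ≤ Dm := le_trans (le_max_right _ _) (le_max_right _ _)
  have bA : dA ≤ K * Dm := by
    rw [hdA, eA, eA']
    refine (hausUnion _ _ _ _).trans (max_le ?_ ?_)
    · exact (hausLip l1 hK0 A A').trans (mul_le_mul_right leA _)
    · exact (hausLip (l2 (σ ^ 2)) hK0 C C').trans (mul_le_mul_right leC _)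
  have bB : dB ≤ K * Dm := by
    rw [hdB, eB, eB']
    exact (hausLip (l2 σ) hK0 A A').trans (mul_le_mul_right leA _)
  have bC : dC ≤ K * Dm := by
    rw [hdC, eC, eC']
    refine (hausUnion _ _ _ _).trans (max_le ?_ ?_)
    · exact (hausLip l1 hK0 C C').trans (mul_le_mul_right leC _)
    · exact (hausLip l1 hK0 D D').trans (mul_le_mul_right leD _)
  have bD : dD ≤ K * Dm := by
    rw [hdD, eD, eD']
    exact (hausLip l1 hK0 B B').trans (mul_le_mul_right leB _)
  have hcontr : Dm ≤ K * Dm := max_le (max_le bA bB) (max_le bC bD)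
  have hDm0 : Dm = 0 := by
    by_contra h
    have htop : Dm ≠ ⊤ := by
      simp only [hDm, ne_eq, max_eq_top, not_or]
      exact ⟨⟨finA, finB⟩, ⟨finC, finD⟩⟩
    have : (K : ENNReal) * Dm < 1 * Dm := ENNReal.mul_lt_mul_left h htop hK1
    rw [one_mul] at this
    exact absurd hcontr (not_le.mpr this)
  refine ⟨?_, ?_, ?_, ?_⟩
  · exact (hausdorffEdist_zero_iff_eq_of_closed cA.isClosed cA'.isClosed).mp
      (le_antisymm (hDm0 ▸ leA) zero_le)
  · exact (hausdorffEdist_zero_iff_eq_of_closed cB.isClosed cB'.isClosed).mp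
      (le_antisymm (hDm0 ▸ leB) zero_le)
  · exact (hausdorffEdist_zero_iff_eq_of_closed cC.isClosed cC'.isClosed).mp
      (le_antisymm (hDm0 ▸ leC) zero_le)
  · exact (hausdorffEdist_zero_iff_eq_of_closed cD.isClosed cD'.isClosed).mp
      (le_antisymm (hDm0 ▸ leD) zero_le)


/-- the quadruple `W_A=[τ−2,τ−1]`, `W_B=[−1,τ−2]`, `W_C=[τ−2,2τ−3]`,
`W_D=[2τ−3,τ−1]` is the unique compact nonempty solution of the window IFS of
`ρ' = (AB, D, CA, C)`; the covering function `m_c = 1_{W_A}+1_{W_B}+1_{W_C}+1_{W_D}`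
equals `1` a.e. on `[−1,τ−2]`, equals `2` a.e. on `[τ−2,τ−1]`, and hence is not
a.e. constant on the total window `[−1,τ−1]`. -/
theorem stmt15
    (τ σ : ℝ) (hτ : τ = (1 + Real.sqrt 5) / 2) (hσ : σ = 1 - τ)
    (mc : ℝ → ℝ)
    (hmc : ∀ y, mc y =
      indicator (Icc (τ - 2) (τ - 1)) (fun _ => (1 : ℝ)) y +
      indicator (Icc (-1) (τ - 2)) (fun _ => (1 : ℝ)) y +
      indicator (Icc (τ - 2) (2 * τ - 3)) (fun _ => (1 : ℝ)) y +
      indicator (Icc (2 * τ - 3) (τ - 1)) (fun _ => (1 : ℝ)) y) :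
    (Icc (τ - 2) (τ - 1) =
        (fun s => σ * s) '' Icc (τ - 2) (τ - 1) ∪
          (fun s => σ * s + σ ^ 2) '' Icc (τ - 2) (2 * τ - 3) ∧
      Icc (-1) (τ - 2) = (fun s => σ * s + σ) '' Icc (τ - 2) (τ - 1) ∧
      Icc (τ - 2) (2 * τ - 3) =
        (fun s => σ * s) '' Icc (τ - 2) (2 * τ - 3) ∪
          (fun s => σ * s) '' Icc (2 * τ - 3) (τ - 1) ∧
      Icc (2 * τ - 3) (τ - 1) = (fun s => σ * s) '' Icc (-1) (τ - 2)) ∧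
    (∀ WA WB WC WD : Set ℝ,
      WA.Nonempty → IsCompact WA → WB.Nonempty → IsCompact WB →
      WC.Nonempty → IsCompact WC → WD.Nonempty → IsCompact WD →
      WA = (fun s => σ * s) '' WA ∪ (fun s => σ * s + σ ^ 2) '' WC →
      WB = (fun s => σ * s + σ) '' WA →
      WC = (fun s => σ * s) '' WC ∪ (fun s => σ * s) '' WD →
      WD = (fun s => σ * s) '' WB →
      WA = Icc (τ - 2) (τ - 1) ∧ WB = Icc (-1) (τ - 2) ∧
        WC = Icc (τ - 2) (2 * τ - 3) ∧ WD = Icc (2 * τ - 3) (τ - 1)) ∧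
    (∀ᵐ y ∂(volume.restrict (Icc (-1) (τ - 2))), mc y = 1) ∧
    (∀ᵐ y ∂(volume.restrict (Icc (τ - 2) (τ - 1))), mc y = 2) ∧
    ¬ ∃ c : ℝ, ∀ᵐ y ∂(volume.restrict (Icc (-1) (τ - 1))), mc y = c := by
  -- numeric facts
  have h5 : Real.sqrt 5 ^ 2 = 5 := Real.sq_sqrt (by norm_num)
  have h5lb : 2 < Real.sqrt 5 := by nlinarith [Real.sqrt_nonneg 5]
  have h5ub : Real.sqrt 5 < 3 := by nlinarith [Real.sqrt_nonneg 5]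
  have ht1 : 1 < τ := by rw [hτ]; linarith
  have ht2 : τ < 2 := by rw [hτ]; linarith
  have ht32 : (3 : ℝ) / 2 < τ := by rw [hτ]; linarith
  have htsq : τ ^ 2 = τ + 1 := by rw [hτ]; field_simp; nlinarith [h5]
  have hσneg : σ < 0 := by rw [hσ]; linarith
  have hσ0 : σ ≠ 0 := hσneg.ne
  have habs : |σ| < 1 := by rw [hσ, abs_of_neg (by linarith : (1:ℝ) - τ < 0)]; linarith
  -- image computations
  have I1 : (fun s => σ * s) '' Icc (τ - 2) (τ - 1) = Icc (τ - 2) (2 * τ - 3) := by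
    rw [mulImage σ _ _ hσneg (by linarith)]
    have e1 : σ * (τ - 1) = τ - 2 := by rw [hσ]; linear_combination (-1 : ℝ) * htsq
    have e2 : σ * (τ - 2) = 2 * τ - 3 := by rw [hσ]; linear_combination (-1 : ℝ) * htsq
    rw [e1, e2]
  have I2 : (fun s => σ * s + σ ^ 2) '' Icc (τ - 2) (2 * τ - 3) = Icc (2 * τ - 3) (τ - 1) := by
    rw [affImage σ (σ ^ 2) _ _ hσneg (by linarith)]
    have e1 : σ * (2 * τ - 3) + σ ^ 2 = 2 * τ - 3 := by
      rw [hσ]; linear_combination (-1 : ℝ) * htsq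
    have e2 : σ * (τ - 2) + σ ^ 2 = τ - 1 := by rw [hσ]; ring
    rw [e1, e2]
  have I3 : (fun s => σ * s + σ) '' Icc (τ - 2) (τ - 1) = Icc (-1) (τ - 2) := by
    rw [affImage σ σ _ _ hσneg (by linarith)]
    have e1 : σ * (τ - 1) + σ = -1 := by rw [hσ]; linear_combination (-1 : ℝ) * htsq
    have e2 : σ * (τ - 2) + σ = τ - 2 := by rw [hσ]; linear_combination (-1 : ℝ) * htsq
    rw [e1, e2]
  have I4 : (fun s => σ * s) '' Icc (τ - 2) (2 * τ - 3) = Icc (3 * τ - 5) (2 * τ - 3) := by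
    rw [mulImage σ _ _ hσneg (by linarith)]
    have e1 : σ * (2 * τ - 3) = 3 * τ - 5 := by rw [hσ]; linear_combination (-2 : ℝ) * htsq
    have e2 : σ * (τ - 2) = 2 * τ - 3 := by rw [hσ]; linear_combination (-1 : ℝ) * htsq
    rw [e1, e2]
  have I5 : (fun s => σ * s) '' Icc (2 * τ - 3) (τ - 1) = Icc (τ - 2) (3 * τ - 5) := by
    rw [mulImage σ _ _ hσneg (by linarith)]
    have e1 : σ * (τ - 1) = τ - 2 := by rw [hσ]; linear_combination (-1 : ℝ) * htsq
    have e2 : σ * (2 * τ - 3) = 3 * τ - 5 := by rw [hσ]; linear_combination (-2 : ℝ) * htsq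
    rw [e1, e2]
  have I6 : (fun s => σ * s) '' Icc (-1) (τ - 2) = Icc (2 * τ - 3) (τ - 1) := by
    rw [mulImage σ _ _ hσneg (by linarith)]
    have e1 : σ * (τ - 2) = 2 * τ - 3 := by rw [hσ]; linear_combination (-1 : ℝ) * htsq
    have e2 : σ * (-1) = τ - 1 := by rw [hσ]; ring
    rw [e1, e2]
  -- the four fixed-point equations
  have hfixA : Icc (τ - 2) (τ - 1) =
      (fun s => σ * s) '' Icc (τ - 2) (τ - 1) ∪
        (fun s => σ * s + σ ^ 2) '' Icc (τ - 2) (2 * τ - 3) := by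
    rw [I1, I2, Icc_union_Icc_eq_Icc (by linarith) (by linarith)]
  have hfixB : Icc (-1 : ℝ) (τ - 2) = (fun s => σ * s + σ) '' Icc (τ - 2) (τ - 1) := I3.symm
  have hfixC : Icc (τ - 2) (2 * τ - 3) =
      (fun s => σ * s) '' Icc (τ - 2) (2 * τ - 3) ∪
        (fun s => σ * s) '' Icc (2 * τ - 3) (τ - 1) := by
    rw [I4, I5, union_comm, Icc_union_Icc_eq_Icc (by linarith) (by linarith)]
  have hfixD : Icc (2 * τ - 3) (τ - 1) = (fun s => σ * s) '' Icc (-1 : ℝ) (τ - 2) := I6.symm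
  -- pointwise values of mc
  have mc1 : ∀ y : ℝ, -1 ≤ y → y < τ - 2 → mc y = 1 := by
    intro y h1 h2
    rw [hmc]
    simp only [indicator_apply, mem_Icc]
    rw [if_neg (by push_neg; intro h; linarith), if_pos ⟨h1, h2.le⟩,
      if_neg (by push_neg; intro h; linarith), if_neg (by push_neg; intro h; linarith)]
    norm_num
  have mc2 : ∀ y : ℝ, τ - 2 < y → y ≤ τ - 1 → y ≠ 2 * τ - 3 → mc y = 2 := by
    intro y h1 h2 h3
    rw [hmc]
    simp only [indicator_apply, mem_Icc]
    rcases lt_or_gt_of_ne h3 with h | h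
    · rw [if_pos ⟨by linarith, h2⟩, if_neg (by push_neg; intro hh; linarith),
        if_pos ⟨by linarith, h.le⟩, if_neg (by push_neg; intro hh; linarith)]
      norm_num
    · rw [if_pos ⟨by linarith, h2⟩, if_neg (by push_neg; intro hh; linarith),
        if_neg (by push_neg; intro hh; linarith), if_pos ⟨h.le, h2⟩]
      norm_num
  -- a.e. statements
  have hnull : (volume : Measure ℝ) ({τ - 2, 2 * τ - 3} : Set ℝ) = 0 :=
    ((Set.finite_singleton (2 * τ - 3)).insert (τ - 2)).countable.measure_zero volume
  have hae0 : ∀ᵐ y ∂(volume : Measure ℝ), y ∉ ({τ - 2, 2 * τ - 3} : Set ℝ) :=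
    measure_eq_zero_iff_ae_notMem.mp hnull
  have aeA : ∀ᵐ y ∂(volume.restrict (Icc (-1 : ℝ) (τ - 2))), mc y = 1 := by
    filter_upwards [ae_restrict_mem measurableSet_Icc, ae_restrict_of_ae hae0] with y hy hne
    simp only [Set.mem_insert_iff, Set.mem_singleton_iff, not_or] at hne
    exact mc1 y hy.1 (lt_of_le_of_ne hy.2 hne.1)
  have aeB : ∀ᵐ y ∂(volume.restrict (Icc (τ - 2) (τ - 1))), mc y = 2 := by
    filter_upwards [ae_restrict_mem measurableSet_Icc, ae_restrict_of_ae hae0] with y hy hne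
    simp only [Set.mem_insert_iff, Set.mem_singleton_iff, not_or] at hne
    exact mc2 y (lt_of_le_of_ne hy.1 (Ne.symm hne.1)) hy.2 hne.2
  refine ⟨⟨hfixA, hfixB, hfixC, hfixD⟩, ?_, aeA, aeB, ?_⟩
  · intro WA WB WC WD n1 c1 n2 c2 n3 c3 n4 c4 e1 e2 e3 e4
    exact ifs_unique hσ0 habs n1 c1 n2 c2 n3 c3 n4 c4
      (nonempty_Icc.mpr (by linarith)) isCompact_Icc
      (nonempty_Icc.mpr (by linarith)) isCompact_Icc
      (nonempty_Icc.mpr (by linarith)) isCompact_Icc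
      (nonempty_Icc.mpr (by linarith)) isCompact_Icc
      e1 e2 e3 e4 hfixA hfixB hfixC hfixD
  · rintro ⟨c, hc⟩
    have sub1 : Icc (-1 : ℝ) (τ - 2) ⊆ Icc (-1 : ℝ) (τ - 1) :=
      Icc_subset_Icc le_rfl (by linarith)
    have sub2 : Icc (τ - 2) (τ - 1) ⊆ Icc (-1 : ℝ) (τ - 1) :=
      Icc_subset_Icc (by linarith) le_rfl
    have hc1 := ae_restrict_of_ae_restrict_of_subset sub1 hc
    have hc2 := ae_restrict_of_ae_restrict_of_subset sub2 hc
    have n1 : volume.restrict (Icc (-1 : ℝ) (τ - 2)) ≠ 0 := by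
      rw [ne_eq, Measure.restrict_eq_zero, Real.volume_Icc]
      simp only [ENNReal.ofReal_eq_zero, not_le]
      linarith
    have n2 : volume.restrict (Icc (τ - 2) (τ - 1)) ≠ 0 := by
      rw [ne_eq, Measure.restrict_eq_zero, Real.volume_Icc]
      simp only [ENNReal.ofReal_eq_zero, not_le]
      linarith
    haveI i1 := ae_neBot.mpr n1
    haveI i2 := ae_neBot.mpr n2
    obtain ⟨y, hy1, hy2⟩ := (aeA.and hc1).exists
    obtain ⟨z, hz1, hz2⟩ := (aeB.and hc2).exists
    rw [hy1] at hy2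
    rw [hz1] at hz2
    linarith
end

section
/- Let I = [−σ², −σ³] and g(x) = σ⁴·x + σ⁴ + σ². Then the unique nonempty compact subset W₁ of ℝ satisfying W₁ = I ∪ g(W₁) is the closure of the set ⋃_{n≥0} (σ^{4n}·[−σ², −σ³] + σ(σ^{4n} − 1)); this closure equals the union ⋃_{n≥0} (σ^{4n}·[−σ², −σ³] + σ(σ^{4n} − 1)) together with the single point −σ, which is the fixed point of g. -/
open Set Filter Topology

/-- with `I = [−σ²,−σ³]` and `g(x) = σ⁴x + σ⁴ + σ²`, the unique
nonempty compact `W₁ ⊆ ℝ` with `W₁ = I ∪ g(W₁)` is the closure of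
`U = ⋃_{n≥0} (σ^{4n}·I + σ(σ^{4n}−1))`, and this closure equals `U ∪ {−σ}`,
where `−σ` is the fixed point of `g`. -/
theorem stmt16
    (τ σ : ℝ) (hτ : τ = (1 + Real.sqrt 5) / 2) (hσ : σ = 1 - τ)
    (U : Set ℝ)
    (hU : U = ⋃ n : ℕ,
      (fun x => σ ^ (4 * n) * x + σ * (σ ^ (4 * n) - 1)) '' Icc (-σ ^ 2) (-σ ^ 3)) :
    (closure U).Nonempty ∧ IsCompact (closure U) ∧
    closure U =
      Icc (-σ ^ 2) (-σ ^ 3) ∪ (fun x => σ ^ 4 * x + σ ^ 4 + σ ^ 2) '' closure U ∧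
    (∀ W : Set ℝ, W.Nonempty → IsCompact W →
      W = Icc (-σ ^ 2) (-σ ^ 3) ∪ (fun x => σ ^ 4 * x + σ ^ 4 + σ ^ 2) '' W →
      W = closure U) ∧
    closure U = U ∪ {-σ} ∧
    σ ^ 4 * (-σ) + σ ^ 4 + σ ^ 2 = -σ := by
  have h5 : Real.sqrt 5 ^ 2 = 5 := Real.sq_sqrt (by norm_num)
  have h5nn : (0:ℝ) ≤ Real.sqrt 5 := Real.sqrt_nonneg 5
  have hσval : σ = (1 - Real.sqrt 5) / 2 := by rw [hσ, hτ]; ring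
  have hσ2 : σ ^ 2 = σ + 1 := by rw [hσval]; linear_combination (1/4 : ℝ) * h5
  have hσneg : σ < 0 := by rw [hσval]; nlinarith [h5, h5nn]
  have hσgt : -1 < σ := by rw [hσval]; nlinarith [h5, h5nn]
  have hσpos : 0 < -σ := by linarith
  have ht0 : 0 < σ ^ 4 := by nlinarith [hσpos]
  have ht1 : σ ^ 4 < 1 := by nlinarith [hσ2, hσneg, hσgt]
  have hfix : σ ^ 4 * (-σ) + σ ^ 4 + σ ^ 2 = -σ := by
    linear_combination (-σ^3 - σ) * hσ2
  -- rewrite U as a union of intervals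
  have hU' : U = ⋃ n : ℕ, Icc (-(σ^4)^n - σ) (-(σ^2 * (σ^4)^n) - σ) := by
    rw [hU]
    refine iUnion_congr fun n => ?_
    have hc : 0 < σ ^ (4*n) := by rw [pow_mul]; exact pow_pos ht0 n
    rw [show (fun x => σ ^ (4*n) * x + σ * (σ ^ (4*n) - 1))
        = (σ ^ (4*n) * · + σ * (σ ^ (4*n) - 1)) from rfl,
      image_affine_Icc' hc]
    rw [pow_mul]
    have e1 : (σ^4)^n * (-σ^2) + σ * ((σ^4)^n - 1) = -(σ^4)^n - σ := by
      linear_combination (-(σ^4)^n) * hσ2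
    have e2 : (σ^4)^n * (-σ^3) + σ * ((σ^4)^n - 1) = -(σ^2 * (σ^4)^n) - σ := by
      linear_combination (-σ * (σ^4)^n) * hσ2
    rw [e1, e2]
  have hab : ∀ n : ℕ, -(σ^4)^n - σ ≤ -(σ^2 * (σ^4)^n) - σ := by
    intro n
    have hs : 0 < (σ^4)^n := pow_pos ht0 n
    nlinarith [hσ2, hσneg, hs]
  have hmemU : ∀ n : ℕ, (-(σ^4)^n - σ) ∈ U := by
    intro n
    rw [hU']
    exact mem_iUnion.2 ⟨n, ⟨le_refl _, hab n⟩⟩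
  have htt : Tendsto (fun n : ℕ => (σ^4)^n) atTop (𝓝 0) :=
    tendsto_pow_atTop_nhds_zero_of_lt_one ht0.le ht1
  have h1 : Tendsto (fun n : ℕ => -(σ^4)^n - σ) atTop (𝓝 (-σ)) := by
    have := (htt.neg).sub_const σ
    simpa using this
  have hσclos : -σ ∈ closure U :=
    mem_closure_of_tendsto h1 (Eventually.of_forall fun n => hmemU n)
  have hUsub : U ⊆ Icc (-σ^2) (-σ) := by
    intro x hx
    rw [hU'] at hx
    obtain ⟨n, hn⟩ := mem_iUnion.1 hx
    have hs : 0 < (σ^4)^n := pow_pos ht0 n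
    have hs1 : (σ^4)^n ≤ 1 := pow_le_one₀ ht0.le ht1.le
    exact ⟨by nlinarith [hn.1], by nlinarith [hn.2]⟩
  have hclos_sub : closure U ⊆ Icc (-σ^2) (-σ) :=
    closure_minimal hUsub isClosed_Icc
  -- closure U ⊆ U ∪ {-σ}
  have key : ∀ x ∈ closure U, x ≠ -σ → x ∈ U := by
    intro x hx hne
    have hxlt : x < -σ := lt_of_le_of_ne (hclos_sub hx).2 hne
    obtain ⟨N, hN⟩ := (h1.eventually (eventually_gt_nhds hxlt)).exists
    set A : Set ℝ := ⋃ n ∈ Finset.range N, Icc (-(σ^4)^n - σ) (-(σ^2 * (σ^4)^n) - σ)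
    have hAB : U ⊆ A ∪ Icc (-(σ^4)^N - σ) (-σ) := by
      rw [hU']
      refine iUnion_subset fun n => ?_
      rcases lt_or_ge n N with h | h
      · exact fun z hz => Or.inl (mem_biUnion (Finset.mem_range.2 h) hz)
      · intro z hz
        have hmono : (σ^4)^n ≤ (σ^4)^N := pow_le_pow_of_le_one ht0.le ht1.le h
        have hs : 0 < (σ^4)^n := pow_pos ht0 n
        exact Or.inr ⟨by nlinarith [hz.1], by nlinarith [hz.2]⟩
    have hclosed : IsClosed (A ∪ Icc (-(σ^4)^N - σ) (-σ)) :=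
      ((isClosed_biUnion_finset fun _ _ => isClosed_Icc).union isClosed_Icc)
    rcases closure_minimal hAB hclosed hx with h | h
    · obtain ⟨n, _, hn⟩ := mem_iUnion₂.1 h
      rw [hU']
      exact mem_iUnion.2 ⟨n, hn⟩
    · exact absurd h.1 (by linarith)
  have hclosEq : closure U = U ∪ {-σ} := by
    refine Subset.antisymm (fun x hx => ?_)
      (union_subset subset_closure (by simpa using hσclos))
    by_cases h : x = -σ
    · exact Or.inr h
    · exact Or.inl (key x hx h)
  -- self-similarity of U
  have gimg : ∀ p q : ℝ, (fun x => σ^4 * x + σ^4 + σ^2) '' Icc p q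
      = Icc (σ^4 * p + σ^4 + σ^2) (σ^4 * q + σ^4 + σ^2) := by
    intro p q
    have := image_affine_Icc' ht0 (σ^4 + σ^2) p q
    simpa [add_assoc] using this
  have hstep : ∀ n : ℕ, (fun x => σ^4 * x + σ^4 + σ^2) ''
        Icc (-(σ^4)^n - σ) (-(σ^2 * (σ^4)^n) - σ)
      = Icc (-(σ^4)^(n+1) - σ) (-(σ^2 * (σ^4)^(n+1)) - σ) := by
    intro n
    rw [gimg]
    have e1 : σ^4 * (-(σ^4)^n - σ) + σ^4 + σ^2 = -(σ^4)^(n+1) - σ := by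
      linear_combination (-σ^3 - σ) * hσ2
    have e2 : σ^4 * (-(σ^2 * (σ^4)^n) - σ) + σ^4 + σ^2
        = -(σ^2 * (σ^4)^(n+1)) - σ := by
      linear_combination (-σ^3 - σ) * hσ2
    rw [e1, e2]
  have hI0 : Icc (-(σ^4)^0 - σ) (-(σ^2 * (σ^4)^0) - σ) = Icc (-σ^2) (-σ^3) := by
    have e1 : -(σ^4:ℝ)^(0:ℕ) - σ = -σ^2 := by
      norm_num; linear_combination hσ2
    have e2 : -(σ^2 * (σ^4:ℝ)^(0:ℕ)) - σ = -σ^3 := by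
      norm_num; linear_combination σ * hσ2
    rw [e1, e2]
  have hsplit : ∀ (s : ℕ → Set ℝ), (⋃ n, s n) = s 0 ∪ ⋃ n, s (n+1) := by
    intro s
    ext x
    simp only [mem_iUnion, mem_union]
    constructor
    · rintro ⟨n, h⟩
      cases n with
      | zero => exact Or.inl h
      | succ m => exact Or.inr ⟨m, h⟩
    · rintro (h | ⟨n, h⟩)
      exacts [⟨0, h⟩, ⟨n+1, h⟩]
  have hUfix : U = Icc (-σ^2) (-σ^3) ∪ (fun x => σ^4 * x + σ^4 + σ^2) '' U := by
    conv_lhs => rw [hU', hsplit]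
    rw [hI0]
    congr 1
    rw [hU', image_iUnion, iUnion_congr hstep]
  -- main closure fixed-point identity
  have hCfix : closure U = Icc (-σ^2) (-σ^3) ∪
      (fun x => σ^4 * x + σ^4 + σ^2) '' closure U := by
    rw [hclosEq, image_union, image_singleton]
    rw [show σ ^ 4 * (-σ) + σ ^ 4 + σ ^ 2 = -σ from hfix, ← union_assoc, ← hUfix]
  refine ⟨⟨-σ, hσclos⟩, isCompact_Icc.of_isClosed_subset isClosed_closure hclos_sub,
    hCfix, ?_, hclosEq, hfix⟩
  -- uniqueness
  intro W hWne hWc hWeq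
  -- closure U ⊆ W
  have hfsub : ∀ n : ℕ, Icc (-(σ^4)^n - σ) (-(σ^2 * (σ^4)^n) - σ) ⊆ W := by
    intro n
    induction n with
    | zero => rw [hI0, hWeq]; exact subset_union_left
    | succ m ih =>
        rw [← hstep m]
        refine (image_mono ih).trans ?_
        conv_rhs => rw [hWeq]
        exact subset_union_right
  have hUW : U ⊆ W := by
    rw [hU']
    exact iUnion_subset hfsub
  have hCW : closure U ⊆ W := closure_minimal hUW hWc.isClosed
  -- W ⊆ closure U
  obtain ⟨R, hR⟩ := hWc.isBounded.subset_closedBall (-σ)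
  have hWbd : ∀ y ∈ W, |y + σ| ≤ |R| := by
    intro y hy
    have := hR hy
    rw [Metric.mem_closedBall, Real.dist_eq] at this
    calc |y + σ| = |y - (-σ)| := by ring_nf
    _ ≤ |R| := this.trans (le_abs_self R)
  have hiter : ∀ x ∈ W, ∀ n : ℕ, x ∈ U ∨ ∃ y ∈ W, x = (σ^4)^n * (y + σ) - σ := by
    intro x hx n
    induction n with
    | zero => exact Or.inr ⟨x, hx, by ring⟩
    | succ m ih =>
        rcases ih with h | ⟨y, hyW, hxy⟩
        · exact Or.inl h
        · rw [hWeq] at hyW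
          rcases hyW with hyI | ⟨z, hzW, hgz⟩
          · left
            rw [hU']
            have hs : 0 < (σ^4)^m := pow_pos ht0 m
            have eL : -(σ^4)^m - σ = (σ^4)^m * (-σ^2 + σ) - σ := by
              linear_combination ((σ^4)^m) * hσ2
            have eR : -(σ^2 * (σ^4)^m) - σ = (σ^4)^m * (-σ^3 + σ) - σ := by
              linear_combination ((σ^4)^m * σ) * hσ2
            refine mem_iUnion.2 ⟨m, ⟨?_, ?_⟩⟩
            · rw [hxy, eL]
              nlinarith [mul_le_mul_of_nonneg_left hyI.1 hs.le]
            · rw [hxy, eR]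
              nlinarith [mul_le_mul_of_nonneg_left hyI.2 hs.le]
          · right
            refine ⟨z, hzW, ?_⟩
            rw [hxy, ← hgz]
            simp only []
            linear_combination (-(σ^4)^m * (σ^3 + σ)) * hσ2
  have hWC : W ⊆ closure U := by
    intro x hxW
    by_cases hxU : x ∈ U
    · exact subset_closure hxU
    · have hbound : ∀ n : ℕ, |x + σ| ≤ (σ^4)^n * |R| := by
        intro n
        obtain ⟨y, hyW, hxy⟩ := (hiter x hxW n).resolve_left hxU
        have hs : 0 < (σ^4)^n := pow_pos ht0 n
        calc |x + σ| = |(σ^4)^n * (y + σ)| := by rw [hxy]; ring_nf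
        _ = (σ^4)^n * |y + σ| := by rw [abs_mul, abs_of_pos hs]
        _ ≤ (σ^4)^n * |R| := by
            exact mul_le_mul_of_nonneg_left (hWbd y hyW) hs.le
      have hlim : Tendsto (fun n : ℕ => (σ^4)^n * |R|) atTop (𝓝 0) := by
        simpa using htt.mul_const |R|
      have : |x + σ| ≤ 0 := ge_of_tendsto' hlim hbound
      have hxσ : x = -σ := by
        have := abs_nonpos_iff.1 this
        linarith
      rw [hclosEq, hxσ]
      exact Or.inr rfl
  exact Subset.antisymm hWC hCW
end

section
/- Let W₁ be the unique nonempty compact subset of ℝ with W₁ = [−σ², −σ³] ∪ g(W₁), where g(x) = σ⁴x + σ⁴ + σ². Then for all y ∈ ℝ, the inverse Fourier transform f₁(y) = ∫_{W₁} exp(2πi x y) dx is given by the absolutely convergent series f₁(y) = − Σ_{n=0}^{∞} σ^{4n+1} · exp(−πi(2σ + 2σ^{4n} + σ^{4n+1})y) · sinc(π σ^{4n+1} y), where sinc(z) = sin(z)/z for z ≠ 0 and sinc(0) = 1. In particular, f₁(0) = τ/√5 = (τ+2)/5, which is the total Lebesgue measure of W₁. -/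
open Set MeasureTheory

set_option maxHeartbeats 1000000

/-- for the unique compact window `W₁` with
`W₁ = [−σ²,−σ³] ∪ g(W₁)`, `g(x) = σ⁴x + σ⁴ + σ²`, the inverse Fourier transform
`f₁(y) = ∫_{W₁} e^{2πixy} dx` is given by the absolutely convergent series
`f₁(y) = −Σₙ σ^{4n+1} e^{−πi(2σ+2σ^{4n}+σ^{4n+1})y} sinc(πσ^{4n+1}y)`,
with `f₁(0) = τ/√5 = (τ+2)/5 = vol(W₁)`. -/
theorem stmt17
    (τ σ : ℝ) (hτ : τ = (1 + Real.sqrt 5) / 2) (hσ : σ = 1 - τ)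
    (sinc : ℝ → ℝ) (hsinc0 : sinc 0 = 1)
    (hsinc : ∀ z : ℝ, z ≠ 0 → sinc z = Real.sin z / z)
    (W₁ : Set ℝ) (hW₁ne : W₁.Nonempty) (hW₁cp : IsCompact W₁)
    (hW₁ : W₁ = Icc (-σ ^ 2) (-σ ^ 3) ∪
      (fun x => σ ^ 4 * x + σ ^ 4 + σ ^ 2) '' W₁) :
    (∀ y : ℝ,
      HasSum
        (fun n : ℕ => -(((σ ^ (4 * n + 1) : ℝ)) : ℂ) *
          Complex.exp (-(Real.pi : ℂ) * Complex.I *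
            (((2 * σ + 2 * σ ^ (4 * n) + σ ^ (4 * n + 1)) : ℝ) : ℂ) * (y : ℂ)) *
          ((sinc (Real.pi * σ ^ (4 * n + 1) * y) : ℝ) : ℂ))
        (∫ x in W₁, Complex.exp (2 * Real.pi * Complex.I * (x : ℂ) * (y : ℂ))) ∧
      Summable
        (fun n : ℕ => ‖-(((σ ^ (4 * n + 1) : ℝ)) : ℂ) *
          Complex.exp (-(Real.pi : ℂ) * Complex.I *
            (((2 * σ + 2 * σ ^ (4 * n) + σ ^ (4 * n + 1)) : ℝ) : ℂ) * (y : ℂ)) *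
          ((sinc (Real.pi * σ ^ (4 * n + 1) * y) : ℝ) : ℂ)‖)) ∧
    (∫ x in W₁, Complex.exp (2 * Real.pi * Complex.I * (x : ℂ) * ((0 : ℝ) : ℂ))) =
      (((τ + 2) / 5 : ℝ) : ℂ) ∧
    τ / Real.sqrt 5 = (τ + 2) / 5 ∧
    (volume W₁).toReal = (τ + 2) / 5 := by
  -- numeric groundwork
  have h5 : Real.sqrt 5 ^ 2 = 5 := Real.sq_sqrt (by norm_num)
  have h5nn := Real.sqrt_nonneg 5
  have h5a : (2:ℝ) < Real.sqrt 5 := by nlinarith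
  have h5b : Real.sqrt 5 < 7/3 := by nlinarith
  have hστ : σ = (1 - Real.sqrt 5)/2 := by rw [hσ, hτ]; ring
  have hσ2 : σ^2 = 1 + σ := by rw [hστ]; nlinarith
  have hσlt : σ < -1/2 := by rw [hστ]; linarith
  have hσgt : -(2/3) < σ := by rw [hστ]; linarith
  have hσ0 : σ < 0 := by linarith
  have hτσ : τ = 1 - σ := by rw [hσ]; ring
  have hσ4 : σ^4 = 2 + 3*σ := by linear_combination (σ^2+σ+2)*hσ2
  have hc0 : (0:ℝ) < σ^4 := by rw [hσ4]; linarith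
  have hc1 : σ^4 < 1 := by rw [hσ4]; linarith
  set g : ℝ → ℝ := fun x => σ ^ 4 * x + σ ^ 4 + σ ^ 2 with hg
  set a : ℕ → ℝ := fun n => -σ^(4*n) - σ with haa
  set b : ℕ → ℝ := fun n => -σ^(4*n+2) - σ with hbb
  have hpow : ∀ n : ℕ, (0:ℝ) < σ^(4*n) := fun n => by
    rw [pow_mul]; exact pow_pos hc0 n
  have hpowle : ∀ n : ℕ, σ^(4*n) ≤ 1 := fun n => by
    rw [pow_mul]; exact pow_le_one₀ hc0.le hc1.le
  have hab : ∀ n, a n < b n := by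
    intro n
    have e : σ^(4*n+2) = σ^(4*n)*σ^2 := by ring
    simp only [haa, hbb]
    nlinarith [hpow n]
  have hbneg : ∀ n, b n < -σ := by
    intro n
    have e : σ^(4*n+2) = σ^(4*n)*σ^2 := by ring
    simp only [hbb]
    nlinarith [hpow n]
  have ha0le : ∀ n, a 0 ≤ a n := by
    intro n
    simp only [haa]
    have : σ^(4*0) = 1 := by norm_num
    simp only [this]
    linarith [hpowle n]
  have himg : ∀ n, g '' Icc (a n) (b n) = Icc (a (n+1)) (b (n+1)) := by
    intro n
    have hgeq : g = fun x => σ^4 * x + (σ^4 + σ^2) := by funext x; simp only [hg]; ring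
    rw [hgeq]
    rw [show (fun x => σ^4 * x + (σ^4 + σ^2)) = (σ^4 * · + (σ^4 + σ^2)) from rfl]
    rw [image_affine_Icc' hc0]
    have e1 : σ^4 * a n + (σ^4 + σ^2) = a (n+1) := by
      simp only [haa]; linear_combination (-(σ^3+σ))*hσ2
    have e2 : σ^4 * b n + (σ^4 + σ^2) = b (n+1) := by
      simp only [hbb]; linear_combination (-(σ^3+σ))*hσ2
    rw [e1, e2]
  have hK0 : Icc (-σ^2) (-σ^3) = Icc (a 0) (b 0) := by
    have e1 : -σ^2 = a 0 := by simp only [haa]; norm_num; linear_combination -hσ2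
    have e2 : -σ^3 = b 0 := by simp only [hbb]; norm_num; linear_combination (-σ)*hσ2
    rw [e1, e2]
  have hgW : g '' W₁ ⊆ W₁ := by
    conv_rhs => rw [hW₁]
    exact subset_union_right
  have hKW : Icc (-σ^2) (-σ^3) ⊆ W₁ := by
    conv_rhs => rw [hW₁]
    exact subset_union_left
  have hIW : ∀ n, Icc (a n) (b n) ⊆ W₁ := by
    intro n; induction n with
    | zero => rw [← hK0]; exact hKW
    | succ n ih => rw [← himg n]; exact (image_mono ih).trans hgW
  have hcontract : ∀ x : ℝ, g x + σ = σ^4 * (x + σ) := by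
    intro x; simp only [hg]; linear_combination (-(σ^3+σ))*hσ2
  obtain ⟨x₀, hx₀⟩ := hW₁ne
  have hiter : ∀ n, g^[n] x₀ ∈ W₁ := by
    intro n; induction n with
    | zero => simpa
    | succ n ih => rw [Function.iterate_succ_apply']; exact hgW ⟨_, ih, rfl⟩
  have hdistit : ∀ n, |g^[n] x₀ + σ| = (σ^4)^n * |x₀ + σ| := by
    intro n; induction n with
    | zero => simp
    | succ n ih =>
      rw [Function.iterate_succ_apply', hcontract, abs_mul, abs_of_pos hc0, ih]; ring
  have hmemσ : -σ ∈ W₁ := by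
    have htend : Filter.Tendsto (fun n => g^[n] x₀) Filter.atTop (nhds (-σ)) := by
      rw [tendsto_iff_dist_tendsto_zero]
      have e : ∀ n, dist (g^[n] x₀) (-σ) = (σ^4)^n * |x₀+σ| := by
        intro n
        rw [Real.dist_eq, show g^[n] x₀ - -σ = g^[n] x₀ + σ by ring]
        exact hdistit n
      simp only [e]
      simpa using (tendsto_pow_atTop_nhds_zero_of_lt_one hc0.le hc1).mul_const |x₀+σ|
    exact hW₁cp.isClosed.mem_of_tendsto htend (Filter.Eventually.of_forall hiter)
  obtain ⟨C, hC⟩ := isBounded_iff_forall_norm_le.mp hW₁cp.isBounded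
  set M : ℝ := C + |σ| + 1 with hM
  have hM0 : 0 < M := by
    have h1 := hC x₀ hx₀
    have h2 := norm_nonneg x₀
    have h3 := abs_nonneg σ
    simp only [hM]; linarith
  have hMW : ∀ x ∈ W₁, |x + σ| ≤ M := by
    intro x hx
    have h1 := hC x hx
    rw [Real.norm_eq_abs] at h1
    calc |x+σ| ≤ |x| + |σ| := abs_add_le _ _
    _ ≤ M := by simp only [hM]; linarith
  have hchain : ∀ n : ℕ, ∀ x ∈ W₁,
      (∃ k, x ∈ Icc (a k) (b k)) ∨ |x + σ| ≤ (σ^4)^n * M := by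
    intro n; induction n with
    | zero => intro x hx; right; simpa using hMW x hx
    | succ n ih =>
      intro x hx
      rw [hW₁] at hx
      rcases hx with hx | ⟨w, hw, rfl⟩
      · exact Or.inl ⟨0, hK0 ▸ hx⟩
      · rcases ih w hw with ⟨k, hk⟩ | hle
        · exact Or.inl ⟨k+1, by rw [← himg k]; exact mem_image_of_mem g hk⟩
        · right
          rw [hcontract, abs_mul, abs_of_pos hc0]
          calc σ^4 * |w+σ| ≤ σ^4 * ((σ^4)^n * M) :=
                mul_le_mul_of_nonneg_left hle hc0.le
          _ = (σ^4)^(n+1) * M := by ring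
  have hWS : W₁ = (⋃ n, Icc (a n) (b n)) ∪ {-σ} := by
    apply Subset.antisymm
    · intro x hx
      rcases eq_or_ne x (-σ) with rfl | hne
      · exact Or.inr rfl
      · left
        have hε : 0 < |x + σ| := by
          rw [abs_pos]
          intro h; exact hne (by linarith)
        obtain ⟨n, hn⟩ := exists_pow_lt_of_lt_one (div_pos hε hM0) hc1
        rcases hchain n x hx with ⟨k, hk⟩ | hle
        · exact mem_iUnion.mpr ⟨k, hk⟩
        · exact absurd ((lt_div_iff₀ hM0).mp hn) (not_lt.mpr hle)
    · rintro x (hx | hx)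
      · obtain ⟨n, hn⟩ := mem_iUnion.mp hx; exact hIW n hn
      · rw [mem_singleton_iff] at hx; subst hx; exact hmemσ
  -- key interval integral formula
  have hkey : ∀ p q z : ℝ, p < q →
      (∫ x in Icc p q, Complex.exp (2 * Real.pi * Complex.I * (x:ℂ) * (z:ℂ)))
        = ((q - p : ℝ) : ℂ) * Complex.exp (((Real.pi * (p + q) * z : ℝ) : ℂ) * Complex.I)
          * ((sinc (Real.pi * (q - p) * z) : ℝ) : ℂ) := by
    intro p q z hpq
    rcases eq_or_ne z 0 with rfl | hz
    · simp only [Complex.ofReal_zero, mul_zero, Complex.exp_zero, mul_one, zero_mul,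
        Complex.ofReal_one, hsinc0]
      rw [setIntegral_const, Measure.real_def, Real.volume_Icc, ENNReal.toReal_ofReal (by linarith)]
      simp [Complex.real_smul]
    · have hc : (2 * (Real.pi:ℂ) * Complex.I * (z:ℂ)) ≠ 0 := by
        refine mul_ne_zero (mul_ne_zero (mul_ne_zero two_ne_zero ?_) Complex.I_ne_zero) ?_
        · exact Complex.ofReal_ne_zero.mpr Real.pi_ne_zero
        · exact Complex.ofReal_ne_zero.mpr hz
      have h1 : (∫ x in Icc p q, Complex.exp (2 * Real.pi * Complex.I * (x:ℂ) * (z:ℂ)))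
          = ∫ x in p..q, Complex.exp ((2 * Real.pi * Complex.I * (z:ℂ)) * (x:ℂ)) := by
        rw [MeasureTheory.integral_Icc_eq_integral_Ioc, ← intervalIntegral.integral_of_le hpq.le]
        congr 1
        funext x
        congr 1
        ring
      rw [h1, integral_exp_mul_complex hc]
      have hθ : Real.pi * (q - p) * z ≠ 0 :=
        mul_ne_zero (mul_ne_zero Real.pi_ne_zero (by linarith)) hz
      set θ : ℝ := Real.pi * (q - p) * z with hθdef
      set φ : ℝ := Real.pi * (p + q) * z with hφdef
      have e1 : (2 * (Real.pi:ℂ) * Complex.I * (z:ℂ)) * (q:ℂ) = ((φ:ℂ) + (θ:ℂ)) * Complex.I := by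
        rw [hθdef, hφdef]; push_cast; ring
      have e2 : (2 * (Real.pi:ℂ) * Complex.I * (z:ℂ)) * (p:ℂ) = ((φ:ℂ) + (-θ:ℂ)) * Complex.I := by
        rw [hθdef, hφdef]; push_cast; ring
      rw [e1, e2, add_mul, add_mul, Complex.exp_add, Complex.exp_add]
      simp only [Complex.exp_mul_I, Complex.cos_neg, Complex.sin_neg]
      rw [hsinc _ hθ]
      have hsin : Complex.sin (θ:ℂ) = ((Real.sin θ : ℝ) : ℂ) := (Complex.ofReal_sin θ).symm
      rw [hsin]
      rw [div_eq_iff hc]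
      have hθC : ((θ:ℝ):ℂ) ≠ 0 := Complex.ofReal_ne_zero.mpr hθ
      field_simp
      rw [hθdef]
      push_cast
      ring_nf
      have hD : ((Real.pi:ℂ) * q * z - Real.pi * p * z) ≠ 0 := by
        intro h; apply hθC; rw [hθdef]; push_cast; linear_combination h
      linear_combination (-(Complex.sin ((Real.pi:ℂ) * q * z - Real.pi * p * z) * 2 *
        (Complex.cos (φ:ℂ) * Complex.I + Complex.sin (φ:ℂ) * Complex.I ^ 2))) * mul_inv_cancel₀ hD
  -- ae equality with the disjoint union of intervals
  have hae : W₁ =ᵐ[volume] ⋃ n, Icc (a n) (b n) := by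
    rw [Filter.eventuallyEq_set]
    filter_upwards [measure_eq_zero_iff_ae_notMem.mp (measure_singleton (-σ))] with x hx
    rw [hWS]
    simp only [mem_union, mem_singleton_iff, mem_iUnion] at *
    constructor
    · rintro (⟨n, h⟩ | rfl)
      · exact ⟨n, h⟩
      · exact absurd rfl hx
    · rintro ⟨n, h⟩; exact Or.inl ⟨n, h⟩
  have hltab : ∀ m n : ℕ, m < n → b m < a n := by
    intro m n hmn
    have e2 : σ^(4*m+2) = (σ^4)^m * σ^2 := by rw [pow_add, pow_mul]
    have e1 : σ^(4*n) = (σ^4)^n := pow_mul σ 4 n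
    have h1 : (σ^4)^n ≤ (σ^4)^(m+1) := pow_le_pow_of_le_one hc0.le hc1.le hmn
    have h42 : σ^4 < σ^2 := by rw [hσ4, hσ2]; linarith
    have hpm : (0:ℝ) < (σ^4)^m := pow_pos hc0 m
    simp only [haa, hbb]
    rw [e1, e2]
    have h2 : (σ^4)^(m+1) = (σ^4)^m * σ^4 := by ring
    nlinarith
  have hdisjkey : ∀ m n : ℕ, m < n → Disjoint (Icc (a m) (b m)) (Icc (a n) (b n)) := by
    intro m n h
    apply Set.disjoint_left.mpr
    intro x hxm hxn
    exact absurd (hxm.2.trans_lt (hltab m n h)) (not_lt.mpr hxn.1)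
  have hdisj : Pairwise (Function.onFun Disjoint fun n => Icc (a n) (b n)) := by
    intro m n hmn
    rcases lt_or_gt_of_ne hmn with h | h
    · exact hdisjkey m n h
    · exact (hdisjkey n m h).symm
  have hcont : ∀ y : ℝ, Continuous fun x : ℝ =>
      Complex.exp (2 * Real.pi * Complex.I * (x:ℂ) * (y:ℂ)) := by
    intro y; fun_prop
  have hsubU : (⋃ n, Icc (a n) (b n)) ⊆ Icc (a 0) (-σ) :=
    iUnion_subset fun n => Icc_subset_Icc (ha0le n) (hbneg n).le
  have hint : ∀ y : ℝ, IntegrableOn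
      (fun x : ℝ => Complex.exp (2 * Real.pi * Complex.I * (x:ℂ) * (y:ℂ)))
      (⋃ n, Icc (a n) (b n)) volume :=
    fun y => IntegrableOn.mono_set ((hcont y).integrableOn_Icc) hsubU
  have hbma : ∀ n : ℕ, b n - a n = -σ^(4*n+1) := by
    intro n; simp only [haa, hbb]; linear_combination (-σ^(4*n))*hσ2
  have hapb : ∀ n : ℕ, a n + b n = -(2*σ + 2*σ^(4*n) + σ^(4*n+1)) := by
    intro n; simp only [haa, hbb]; linear_combination (-σ^(4*n))*hσ2
  have hsinc_neg : ∀ z : ℝ, sinc (-z) = sinc z := by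
    intro z
    rcases eq_or_ne z 0 with rfl | hz
    · norm_num
    · rw [hsinc _ (neg_ne_zero.mpr hz), hsinc _ hz, Real.sin_neg, neg_div_neg_eq]
  have hterm : ∀ (y : ℝ) (n : ℕ),
      (∫ x in Icc (a n) (b n), Complex.exp (2 * Real.pi * Complex.I * (x:ℂ) * (y:ℂ)))
        = -(((σ ^ (4 * n + 1) : ℝ)) : ℂ) *
          Complex.exp (-(Real.pi : ℂ) * Complex.I *
            (((2 * σ + 2 * σ ^ (4 * n) + σ ^ (4 * n + 1)) : ℝ) : ℂ) * (y : ℂ)) *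
          ((sinc (Real.pi * σ ^ (4 * n + 1) * y) : ℝ) : ℂ) := by
    intro y n
    rw [hkey _ _ y (hab n)]
    have hargs : (((Real.pi * (a n + b n) * y : ℝ)):ℂ) * Complex.I
        = -(Real.pi:ℂ) * Complex.I * (((2*σ + 2*σ^(4*n) + σ^(4*n+1)) : ℝ):ℂ) * (y:ℂ) := by
      rw [hapb n]; push_cast; ring
    rw [hargs, hbma n]
    rw [show Real.pi * (-σ^(4*n+1)) * y = -(Real.pi * σ^(4*n+1) * y) by ring, hsinc_neg]
    push_cast
    ring
  have hMain : ∀ y : ℝ,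
      HasSum
        (fun n : ℕ => -(((σ ^ (4 * n + 1) : ℝ)) : ℂ) *
          Complex.exp (-(Real.pi : ℂ) * Complex.I *
            (((2 * σ + 2 * σ ^ (4 * n) + σ ^ (4 * n + 1)) : ℝ) : ℂ) * (y : ℂ)) *
          ((sinc (Real.pi * σ ^ (4 * n + 1) * y) : ℝ) : ℂ))
        (∫ x in W₁, Complex.exp (2 * Real.pi * Complex.I * (x : ℂ) * (y : ℂ))) := by
    intro y
    have H := hasSum_integral_iUnion (μ := volume) (fun n : ℕ => measurableSet_Icc)
      hdisj (hint y)
    rw [setIntegral_congr_set hae]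
    simp only [hterm y] at H
    exact H
  -- summability of norms
  have habs : ∀ z : ℝ, |sinc z| ≤ 1 := by
    intro z
    rcases eq_or_ne z 0 with rfl | hz
    · rw [hsinc0]; norm_num
    · rw [hsinc _ hz, abs_div]
      exact div_le_one_of_le₀ Real.abs_sin_le_abs (abs_nonneg _)
  have hnorm : ∀ (y : ℝ) (n : ℕ),
      ‖-(((σ ^ (4 * n + 1) : ℝ)) : ℂ) *
          Complex.exp (-(Real.pi : ℂ) * Complex.I *
            (((2 * σ + 2 * σ ^ (4 * n) + σ ^ (4 * n + 1)) : ℝ) : ℂ) * (y : ℂ)) *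
          ((sinc (Real.pi * σ ^ (4 * n + 1) * y) : ℝ) : ℂ)‖ ≤ |σ|^(4*n+1) := by
    intro y n
    have hexp : ‖Complex.exp (-(Real.pi : ℂ) * Complex.I *
        (((2 * σ + 2 * σ ^ (4 * n) + σ ^ (4 * n + 1)) : ℝ) : ℂ) * (y : ℂ))‖ = 1 := by
      rw [show -(Real.pi : ℂ) * Complex.I *
          (((2 * σ + 2 * σ ^ (4 * n) + σ ^ (4 * n + 1)) : ℝ) : ℂ) * (y : ℂ)
          = (((-(Real.pi * (2 * σ + 2 * σ ^ (4 * n) + σ ^ (4 * n + 1)) * y)) : ℝ) : ℂ)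
            * Complex.I by push_cast; ring]
      exact Complex.norm_exp_ofReal_mul_I _
    rw [norm_mul, norm_mul, norm_neg, hexp, Complex.norm_real, Complex.norm_real,
      Real.norm_eq_abs, Real.norm_eq_abs, abs_pow]
    have h1 := habs (Real.pi * σ ^ (4 * n + 1) * y)
    have h2 := abs_nonneg (sinc (Real.pi * σ ^ (4 * n + 1) * y))
    have h3 : (0:ℝ) ≤ |σ|^(4*n+1) := pow_nonneg (abs_nonneg σ) _
    nlinarith
  have hsum_geo : Summable (fun n : ℕ => |σ|^(4*n+1)) := by
    have h1 : |σ|^4 < 1 := by rw [← abs_pow, abs_of_pos hc0]; exact hc1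
    have h2 : Summable (fun n : ℕ => (|σ|^4)^n) :=
      summable_geometric_of_lt_one (by positivity) h1
    exact (h2.mul_left |σ|).congr
      (fun n => by rw [pow_add, pow_mul, pow_one]; ring)
  have hSumm : ∀ y : ℝ, Summable
      (fun n : ℕ => ‖-(((σ ^ (4 * n + 1) : ℝ)) : ℂ) *
          Complex.exp (-(Real.pi : ℂ) * Complex.I *
            (((2 * σ + 2 * σ ^ (4 * n) + σ ^ (4 * n + 1)) : ℝ) : ℂ) * (y : ℂ)) *
          ((sinc (Real.pi * σ ^ (4 * n + 1) * y) : ℝ) : ℂ)‖) :=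
    fun y => Summable.of_nonneg_of_le (fun n => norm_nonneg _) (hnorm y) hsum_geo
  -- value at 0
  have hval : (∫ x in W₁, Complex.exp (2 * Real.pi * Complex.I * (x : ℂ) * ((0:ℝ) : ℂ)))
      = (((τ + 2) / 5 : ℝ) : ℂ) := by
    have H := hMain 0
    have hgeoR : HasSum (fun n : ℕ => -σ^(4*n+1)) ((τ+2)/5) := by
      have hg2 := hasSum_geometric_of_lt_one hc0.le hc1
      have hg3 := hg2.mul_left (-σ)
      have hv : -σ * (1 - σ^4)⁻¹ = (τ+2)/5 := by
        have hne : (1:ℝ) - σ^4 ≠ 0 := by nlinarith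
        rw [hτσ]
        field_simp
        linear_combination (-σ^3+2*σ^2+σ+3)*hσ2
      rw [hv] at hg3
      have hfun : (fun n : ℕ => -σ^(4*n+1)) = fun n : ℕ => -σ * (σ^4)^n :=
        funext fun n => by rw [pow_add, pow_mul, pow_one]; ring
      rw [hfun]
      exact hg3
    have hgeoC := hgeoR.mapL (Complex.ofRealCLM : ℝ →L[ℝ] ℂ)
    have hgeoC' : HasSum (fun n : ℕ => -((σ^(4*n+1) : ℝ):ℂ)) (((τ+2)/5 : ℝ):ℂ) := by
      simpa using hgeoC
    simp only [Complex.ofReal_zero, mul_zero, Complex.exp_zero, mul_one, hsinc0,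
      Complex.ofReal_one] at H ⊢
    exact H.unique hgeoC'
  have hτ5 : τ / Real.sqrt 5 = (τ + 2) / 5 := by
    rw [hτ, div_eq_div_iff (by positivity : Real.sqrt 5 ≠ 0) (by norm_num : (5:ℝ) ≠ 0)]
    linear_combination (-(1:ℝ)/2)*h5
  have hvolW : (volume W₁).toReal = (τ + 2) / 5 := by
    have hone : (∫ x in W₁, Complex.exp (2 * Real.pi * Complex.I * (x : ℂ) * ((0:ℝ) : ℂ)))
        = (((volume W₁).toReal : ℝ):ℂ) := by
      simp only [Complex.ofReal_zero, mul_zero, Complex.exp_zero]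
      rw [setIntegral_const, Complex.real_smul, mul_one, Measure.real_def]
    have := hone.symm.trans hval
    exact_mod_cast this
  exact ⟨fun y => ⟨hMain y, hSumm y⟩, hval, hτ5, hvolW⟩
end
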